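/- Let p ≥ 1 and let d_1,…,d_p be reals with 0 < d_1 ≤ d_2 ≤ … ≤ d_p, and let b be a real with 0 < b ≤ p. Suppose c ∈ {1,…,p} is the largest integer satisfying 0 < b + c − p ≤ Σ_{i=1}^c d_i / d_c. Define π*_j = (b + c − p)·d_j / (Σ_{i=1}^c d_i) for j ≤ c and π*_j = 1 for j > c. Then π* is feasible, i.e., 0 < π*_j ≤ 1 for all j and Σ_{j=1}^p π*_j = b, and π* minimizes the variance objective Σ_{j=1}^p d_j²·(1−π_j)/π_j over the feasible set { π ∈ ℝ^p : 0 < π_j ≤ 1 for all j, Σ_{j=1}^p π_j = b }. -/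

import Mathlib

private lemma tangent_ineq {d2 x y : ℝ} (hd2 : 0 ≤ d2) (hx : 0 < x) (hy : 0 < y) :
    d2 / y ≤ d2 / x + d2 / y ^ 2 * (x - y) := by
  have h : d2 / x + d2 / y ^ 2 * (x - y) - d2 / y = d2 * (x - y) ^ 2 / (x * y ^ 2) := by
    field_simp
    ring
  have hC : 0 ≤ d2 * (x - y) ^ 2 / (x * y ^ 2) :=
    div_nonneg (mul_nonneg hd2 (sq_nonneg _)) (le_of_lt (mul_pos hx (pow_pos hy 2)))
  linarith

theorem optimal_sampling_probabilities (p : ℕ) (hp : 1 ≤ p)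
    (d : ℕ → ℝ) (hd1 : 0 < d 1)
    (hdmono : ∀ i ∈ Finset.Ico 1 p, d i ≤ d (i + 1))
    (b : ℝ) (hb0 : 0 < b) (hbp : b ≤ p)
    (c : ℕ) (hc : c ∈ Finset.Icc 1 p)
    (hcsat : 0 < b + c - p ∧ b + c - p ≤ (∑ i ∈ Finset.Icc 1 c, d i) / d c)
    (hclargest : ∀ c' ∈ Finset.Icc 1 p,
      (0 < b + c' - p ∧ b + c' - p ≤ (∑ i ∈ Finset.Icc 1 c', d i) / d c') → c' ≤ c)
    (πstar : ℕ → ℝ)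
    (hπstar : ∀ j ∈ Finset.Icc 1 p,
      πstar j = if j ≤ c then (b + c - p) * d j / (∑ i ∈ Finset.Icc 1 c, d i) else 1) :
    (∀ j ∈ Finset.Icc 1 p, 0 < πstar j ∧ πstar j ≤ 1) ∧
      (∑ j ∈ Finset.Icc 1 p, πstar j = b) ∧
      (∀ π : ℕ → ℝ, (∀ j ∈ Finset.Icc 1 p, 0 < π j ∧ π j ≤ 1) →
        (∑ j ∈ Finset.Icc 1 p, π j = b) →
        ∑ j ∈ Finset.Icc 1 p, d j ^ 2 * (1 - πstar j) / πstar j ≤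
          ∑ j ∈ Finset.Icc 1 p, d j ^ 2 * (1 - π j) / π j) := by
  obtain ⟨hc1, hcp⟩ := Finset.mem_Icc.mp hc
  obtain ⟨hα0, hαS⟩ := hcsat
  set S : ℝ := ∑ i ∈ Finset.Icc 1 c, d i with hSdef
  set α : ℝ := b + ↑c - ↑p with hαdef
  -- monotonicity
  have hmono : ∀ i j : ℕ, 1 ≤ i → i ≤ j → j ≤ p → d i ≤ d j := by
    intro i j hi hij hjp
    induction j with
    | zero => omega
    | succ k ih =>
      rcases Nat.lt_or_ge i (k + 1) with h | h
      · have hik : i ≤ k := by omega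
        have hk : d i ≤ d k := ih hik (by omega)
        have : d k ≤ d (k + 1) :=
          hdmono k (Finset.mem_Ico.mpr ⟨by omega, by omega⟩)
        linarith
      · have : i = k + 1 := by omega
        simp [this]
  have hdpos : ∀ j : ℕ, 1 ≤ j → j ≤ p → 0 < d j := by
    intro j h1 h2
    exact lt_of_lt_of_le hd1 (hmono 1 j le_rfl h1 h2)
  have hdc : 0 < d c := hdpos c hc1 hcp
  have hSpos : 0 < S := by
    apply Finset.sum_pos
    · intro i hi
      obtain ⟨h1, h2⟩ := Finset.mem_Icc.mp hi
      exact hdpos i h1 (le_trans h2 hcp)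
    · exact ⟨c, Finset.mem_Icc.mpr ⟨hc1, le_rfl⟩⟩
  have hαdc : α * d c ≤ S := (le_div_iff₀ hdc).mp hαS
  -- key: for j > c in range, S ≤ α * d j
  have hkey : ∀ j : ℕ, c < j → j ≤ p → S ≤ α * d j := by
    intro j hcj hjp
    have hc1p : c + 1 ≤ p := by omega
    have hdc1 : 0 < d (c + 1) := hdpos (c + 1) (by omega) hc1p
    have hnot : ¬ (0 < b + ↑(c + 1) - ↑p ∧
        b + ↑(c + 1) - ↑p ≤ (∑ i ∈ Finset.Icc 1 (c + 1), d i) / d (c + 1)) := by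
      intro hcond
      have := hclargest (c + 1) (Finset.mem_Icc.mpr ⟨by omega, hc1p⟩) hcond
      omega
    have h1 : (0:ℝ) < b + ↑(c + 1) - ↑p := by push_cast; push_cast at hαdef; linarith
    have h2 : ¬ (b + ↑(c + 1) - ↑p ≤ (∑ i ∈ Finset.Icc 1 (c + 1), d i) / d (c + 1)) := by
      intro h; exact hnot ⟨h1, h⟩
    push_neg at h2
    have hsum : (∑ i ∈ Finset.Icc 1 (c + 1), d i) = S + d (c + 1) := by
      rw [hSdef]
      exact Finset.sum_Icc_succ_top (by omega) d
    rw [hsum, div_lt_iff₀ hdc1] at h2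
    push_cast at h2
    have hstep : S < α * d (c + 1) := by nlinarith
    have : α * d (c + 1) ≤ α * d j := by
      rcases Nat.eq_or_lt_of_le (Nat.succ_le_of_lt hcj) with h | h
      · rw [← h]
      · exact mul_le_mul_of_nonneg_left (hmono (c + 1) j (by omega) (by omega) hjp) (le_of_lt hα0)
    linarith
  -- feasibility: bounds
  have hfeas : ∀ j ∈ Finset.Icc 1 p, 0 < πstar j ∧ πstar j ≤ 1 := by
    intro j hj
    obtain ⟨hj1, hjp⟩ := Finset.mem_Icc.mp hj
    rw [hπstar j hj]
    split_ifs with hjc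
    · constructor
      · exact div_pos (mul_pos hα0 (hdpos j hj1 hjp)) hSpos
      · rw [div_le_one hSpos]
        have : d j ≤ d c := hmono j c hj1 hjc hcp
        nlinarith
    · exact ⟨one_pos, le_rfl⟩
  -- sum splitting helper
  have hsplit : ∀ f : ℕ → ℝ,
      (∑ j ∈ Finset.Icc 1 c, f j) + (∑ j ∈ Finset.Ioc c p, f j) =
        ∑ j ∈ Finset.Icc 1 p, f j := by
    intro f
    have e1 : Finset.Icc 1 c = Finset.Ioc 0 c := by rw [← Finset.Icc_add_one_left_eq_Ioc]; rfl
    have e2 : Finset.Icc 1 p = Finset.Ioc 0 p := by rw [← Finset.Icc_add_one_left_eq_Ioc]; rfl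
    rw [e1, e2]
    exact Finset.sum_Ioc_consecutive f (Nat.zero_le c) hcp
  have hmem1 : ∀ j ∈ Finset.Icc 1 c, j ∈ Finset.Icc 1 p :=
    fun j hj => Finset.mem_Icc.mpr ⟨(Finset.mem_Icc.mp hj).1,
      le_trans (Finset.mem_Icc.mp hj).2 hcp⟩
  have hmem2 : ∀ j ∈ Finset.Ioc c p, j ∈ Finset.Icc 1 p :=
    fun j hj => Finset.mem_Icc.mpr ⟨by
      have := (Finset.mem_Ioc.mp hj).1; omega, (Finset.mem_Ioc.mp hj).2⟩
  -- sum of πstar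
  have hsum1 : ∑ j ∈ Finset.Icc 1 c, πstar j = α := by
    have h : ∀ j ∈ Finset.Icc 1 c, πstar j = α * d j / S := by
      intro j hj
      rw [hπstar j (hmem1 j hj), if_pos (Finset.mem_Icc.mp hj).2]
    rw [Finset.sum_congr rfl h, ← Finset.sum_div, ← Finset.mul_sum, ← hSdef,
      mul_div_assoc, div_self (ne_of_gt hSpos), mul_one]
  have hsum2 : ∑ j ∈ Finset.Ioc c p, πstar j = (p : ℝ) - c := by
    have h : ∀ j ∈ Finset.Ioc c p, πstar j = 1 := by
      intro j hj
      rw [hπstar j (hmem2 j hj), if_neg (not_le.mpr (Finset.mem_Ioc.mp hj).1)]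
    rw [Finset.sum_congr rfl h, Finset.sum_const, Nat.card_Ioc, nsmul_eq_mul, mul_one,
      Nat.cast_sub hcp]
  have hsumstar : ∑ j ∈ Finset.Icc 1 p, πstar j = b := by
    rw [← hsplit πstar, hsum1, hsum2, hαdef]; ring
  refine ⟨hfeas, hsumstar, ?_⟩
  -- optimality
  intro π hπfeas hπsum
  set lam : ℝ := (S / α) ^ 2 with hlamdef
  have hpt : ∀ j ∈ Finset.Icc 1 p,
      d j ^ 2 / πstar j ≤ d j ^ 2 / π j + lam * (π j - πstar j) := by
    intro j hj
    obtain ⟨hj1, hjp⟩ := Finset.mem_Icc.mp hj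
    have hdj : 0 < d j := hdpos j hj1 hjp
    have hπj : 0 < π j := (hπfeas j hj).1
    have hπs : 0 < πstar j := (hfeas j hj).1
    have hval := hπstar j hj
    by_cases hjc : j ≤ c
    · rw [if_pos hjc] at hval
      have hlameq : lam = d j ^ 2 / (πstar j) ^ 2 := by
        rw [hlamdef, hval]
        field_simp
      rw [hlameq]
      exact tangent_ineq (sq_nonneg _) hπj hπs
    · rw [if_neg hjc] at hval
      have hkj : S ≤ α * d j := hkey j (by omega) hjp
      have hlamle : lam ≤ d j ^ 2 := by
        rw [hlamdef]
        have h1 : S / α ≤ d j := (div_le_iff₀ hα0).mpr (by linarith [hkj]; )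
        have h2 : 0 ≤ S / α := le_of_lt (div_pos hSpos hα0)
        nlinarith
      have htan := tangent_ineq (sq_nonneg (d j)) hπj (show (0:ℝ) < 1 from one_pos)
      have hπle1 : π j ≤ 1 := (hπfeas j hj).2
      have hmul : d j ^ 2 * (π j - 1) ≤ lam * (π j - 1) :=
        mul_le_mul_of_nonpos_right hlamle (by linarith)
      rw [hval]
      simp only [one_pow, div_one] at htan ⊢
      linarith
  -- summing up the pointwise inequality
  have hsummed : ∑ j ∈ Finset.Icc 1 p, d j ^ 2 / πstar j ≤
      ∑ j ∈ Finset.Icc 1 p, d j ^ 2 / π j := by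
    calc ∑ j ∈ Finset.Icc 1 p, d j ^ 2 / πstar j
        ≤ ∑ j ∈ Finset.Icc 1 p, (d j ^ 2 / π j + lam * (π j - πstar j)) :=
          Finset.sum_le_sum hpt
      _ = ∑ j ∈ Finset.Icc 1 p, d j ^ 2 / π j +
            lam * ((∑ j ∈ Finset.Icc 1 p, π j) - ∑ j ∈ Finset.Icc 1 p, πstar j) := by
          rw [Finset.sum_add_distrib, ← Finset.mul_sum, Finset.sum_sub_distrib]
      _ = ∑ j ∈ Finset.Icc 1 p, d j ^ 2 / π j := by
          rw [hπsum, hsumstar]; ring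
  have hobj : ∀ (σ : ℕ → ℝ), (∀ j ∈ Finset.Icc 1 p, 0 < σ j) →
      ∑ j ∈ Finset.Icc 1 p, d j ^ 2 * (1 - σ j) / σ j =
        (∑ j ∈ Finset.Icc 1 p, d j ^ 2 / σ j) - ∑ j ∈ Finset.Icc 1 p, d j ^ 2 := by
    intro σ hσ
    rw [← Finset.sum_sub_distrib]
    apply Finset.sum_congr rfl
    intro j hj
    have h := hσ j hj
    field_simp
  rw [hobj πstar (fun j hj => (hfeas j hj).1), hobj π (fun j hj => (hπfeas j hj).1)]
  linarith
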